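/- Let K be an infinite compact Hausdorff space whose weight w(K) is a strong limit cardinal. Then the closed unit ball of C(K) contains a 2-equilateral set of cardinality w(K). -/
import Mathlib

open Cardinal

/-- The weight of a topological space: the minimal infinite cardinality of a
base for its topology. -/
noncomputable def weight (X : Type u) [TopologicalSpace X] : Cardinal.{u} :=
  ⨅ B : {B : Set (Set X) // TopologicalSpace.IsTopologicalBasis B}, max #B.1 ℵ₀

open Set TopologicalSpace

lemma aleph0_le_weight (X : Type u) [TopologicalSpace X] : ℵ₀ ≤ weight X := by
  haveI : Nonempty {B : Set (Set X) // IsTopologicalBasis B} :=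
    ⟨⟨_, isTopologicalBasis_opens⟩⟩
  exact le_ciInf fun B => le_max_right _ _

lemma weight_le_basis {X : Type u} [TopologicalSpace X] {B : Set (Set X)}
    (hB : IsTopologicalBasis B) : weight X ≤ max #B ℵ₀ :=
  ciInf_le' (fun B : {B : Set (Set X) // IsTopologicalBasis B} => max #B.1 ℵ₀) ⟨B, hB⟩

lemma weight_le_two_pow {X : Type u} [TopologicalSpace X] [RegularSpace X]
    {D : Set X} (hD : Dense D) : weight X ≤ 2 ^ max #D ℵ₀ := by
  set B : Set (Set X) := (fun A : Set X ↦ interior (closure A)) '' 𝒫 D with hBdef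
  have hbasis : IsTopologicalBasis B := by
    apply isTopologicalBasis_of_isOpen_of_nhds
    · rintro u ⟨A, -, rfl⟩; exact isOpen_interior
    · intro a u hau hu
      obtain ⟨t, ht, htc, hts⟩ := exists_mem_nhds_isClosed_subset (hu.mem_nhds hau)
      refine ⟨interior (closure (interior t ∩ D)), ⟨interior t ∩ D, inter_subset_right, rfl⟩,
        ?_, ?_⟩
      · have h1 : interior t ⊆ closure (interior t ∩ D) :=
          hD.open_subset_closure_inter isOpen_interior
        exact interior_maximal h1 isOpen_interior (mem_interior_iff_mem_nhds.mpr ht)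
      · calc interior (closure (interior t ∩ D)) ⊆ closure (interior t ∩ D) :=
              interior_subset
          _ ⊆ closure t := closure_mono (inter_subset_left.trans interior_subset)
          _ = t := htc.closure_eq
          _ ⊆ u := hts
  have hcard : #B ≤ 2 ^ max #D ℵ₀ := by
    calc #B ≤ #(𝒫 D) := mk_image_le
      _ = 2 ^ #D := by rw [mk_powerset]
      _ ≤ 2 ^ max #D ℵ₀ := by
          exact power_le_power_left (by norm_num) (le_max_left _ _)
  refine (weight_le_basis hbasis).trans (max_le hcard ?_)
  calc ℵ₀ ≤ 2 ^ ℵ₀ := (cantor ℵ₀).le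
    _ ≤ 2 ^ max #D ℵ₀ := power_le_power_left (by norm_num) (le_max_right _ _)

lemma key {K : Type u} [TopologicalSpace K] [CompactSpace K] [T2Space K] [Infinite K]
    (hsl : ∀ lam < weight K, (2 : Cardinal.{u}) ^ lam < weight K)
    (S : Set K) (hS : #S < weight K) : (closure S)ᶜ.Nonempty := by
  rw [nonempty_compl]
  intro hdense
  have hD : Dense S := by rw [dense_iff_closure_eq, hdense]
  rcases lt_or_ge ℵ₀ (weight K) with h | h
  · have hlam : max #S ℵ₀ < weight K := max_lt hS h
    exact absurd (weight_le_two_pow hD) (not_le.mpr (hsl _ hlam))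
  · have hfin : S.Finite := by
      exact Cardinal.lt_aleph0_iff_set_finite.mp (hS.trans_le h)
    have : closure S = S := hfin.isClosed.closure_eq
    rw [this] at hdense
    exact absurd (hdense ▸ Set.infinite_univ) hfin.not_infinite

/-- If `w(K)` is a strong limit cardinal, then the closed unit ball of `C(K)` contains a
`2`-equilateral set of cardinality `w(K)`. -/
theorem statement14 (K : Type u) [TopologicalSpace K] [CompactSpace K] [T2Space K] [Infinite K]
    (hsl : ∀ lam < weight K, (2 : Cardinal.{u}) ^ lam < weight K) :
    ∃ A : Set C(K, ℝ), A ⊆ Metric.closedBall 0 1 ∧ #A = weight K ∧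
      ∀ f ∈ A, ∀ g ∈ A, f ≠ g → ‖f - g‖ = 2 := by
  classical
  set κ := weight K with hκ
  let ι := κ.ord.ToType
  -- the picking function
  have pick : ∀ S : Set K, #S < κ → {y : K // y ∉ closure S} := by
    intro S hS
    exact ⟨(key hsl S hS).choose, (key hsl S hS).choose_spec⟩
  -- build a left-separated transfinite sequence
  let F : ∀ i : ι, (∀ j, j < i → K) → K := fun i f =>
    (pick (Set.range fun p : {j : ι // j < i} => f p.1 p.2)
      (lt_of_le_of_lt mk_range_le (Cardinal.mk_Iio_ord_toType i))).1
  let x : ι → K := (IsWellFounded.wf (α := ι) (r := (· < ·))).fix F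
  have hxeq : ∀ i : ι, x i = F i (fun j _ => x j) :=
    fun i => WellFounded.fix_eq _ F i
  have hx : ∀ i : ι, x i ∉ closure (Set.range fun p : {j : ι // j < i} => x p.1) := by
    intro i
    rw [hxeq i]
    exact (pick _ _).2
  -- Urysohn functions
  have hg : ∀ i : ι, ∃ g : C(K, ℝ), ‖g‖ ≤ 1 ∧ g (x i) = 1 ∧ ∀ j, j < i → g (x j) = -1 := by
    intro i
    set C : Set K := closure (Set.range fun p : {j : ι // j < i} => x p.1) with hC
    obtain ⟨f, hf0, hf1, hf01⟩ := exists_continuous_zero_one_of_isClosed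
      (isClosed_closure (s := (Set.range fun p : {j : ι // j < i} => x p.1)))
      (isClosed_singleton (x := x i)) (by
        rw [Set.disjoint_singleton_right]; exact hx i)
    refine ⟨(2 : ℝ) • f - ContinuousMap.const K 1, ?_, ?_, ?_⟩
    · rw [ContinuousMap.norm_le _ zero_le_one]
      intro y
      have := hf01 y
      simp only [ContinuousMap.sub_apply, ContinuousMap.smul_apply, ContinuousMap.const_apply,
        smul_eq_mul, Real.norm_eq_abs]
      rw [abs_le]
      constructor <;> nlinarith [this.1, this.2]
    · have : f (x i) = 1 := hf1 rfl
      simp [this]; norm_num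
    · intro j hj
      have hmem : x j ∈ C := subset_closure ⟨⟨j, hj⟩, rfl⟩
      have : f (x j) = 0 := hf0 hmem
      simp [this]
  choose g hg1 hg2 hg3 using hg
  -- key pairwise property
  have hpair : ∀ i j : ι, j < i → ‖g i - g j‖ = 2 := by
    intro i j hij
    apply le_antisymm
    · calc ‖g i - g j‖ ≤ ‖g i‖ + ‖g j‖ := norm_sub_le _ _
        _ ≤ 1 + 1 := add_le_add (hg1 i) (hg1 j)
        _ = 2 := by norm_num
    · have : ‖(g i - g j) (x j)‖ ≤ ‖g i - g j‖ := ContinuousMap.norm_coe_le_norm _ _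
      rw [ContinuousMap.sub_apply, hg3 i j hij, hg2 j] at this
      rw [show ((-1:ℝ) - 1) = -2 by norm_num, norm_neg] at this
      simpa using this
  have hginj : Function.Injective g := by
    intro i j hij
    by_contra hne
    rcases lt_or_gt_of_ne hne with h | h
    · have := hpair j i h
      rw [hij, sub_self, norm_zero] at this; norm_num at this
    · have := hpair i j h
      rw [hij, sub_self, norm_zero] at this; norm_num at this
  refine ⟨Set.range g, ?_, ?_, ?_⟩
  · rintro _ ⟨i, rfl⟩
    rw [Metric.mem_closedBall, dist_zero_right]
    exact hg1 i
  · rw [Cardinal.mk_range_eq g hginj]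
    show #κ.ord.ToType = κ
    rw [Cardinal.mk_toType, card_ord]
  · rintro _ ⟨i, rfl⟩ _ ⟨j, rfl⟩ hne
    have hij : i ≠ j := fun h => hne (h ▸ rfl)
    rcases lt_or_gt_of_ne hij with h | h
    · rw [← norm_neg]; simpa using hpair j i h
    · exact hpair i j h
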